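/- Let α be a unital partial action of a group G on a commutative ring or commutative monoid T, with ideals D_g = T·1_g for idempotents 1_g. Then the set C^n(G, α, T) of n-cochains, i.e. functions f : G^n → T with f(g_1,…,g_n) invertible in T·1_{g_1}·1_{g_1 g_2}⋯1_{g_1⋯g_n}, is an abelian group under pointwise multiplication, with identity (g_1,…,g_n) ↦ 1_{g_1}·1_{g_1 g_2}⋯1_{g_1⋯g_n}. -/
import Mathlib


/-- A unital partial action of a group `G` on a commutative monoid `T`: each ideal
`D_g = T·(e g)` is generated by an idempotent `e g`, and `act g` is (the extension to
all of `T` of) a multiplicative isomorphism `D_{g⁻¹} → D_g`. -/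
structure MonoidPartialAction (G : Type*) (T : Type*) [Group G] [CommMonoid T] where
  e : G → T
  idem : ∀ g, IsIdempotentElem (e g)
  e_one : e 1 = 1
  act : G → T → T
  act_one : ∀ t, act 1 t = t
  act_mul : ∀ g x y, act g (x * y) = act g x * act g y
  act_proj : ∀ g x, act g x = act g (x * e g⁻¹)
  act_e : ∀ g, act g (e g⁻¹) = e g
  mem_range : ∀ g x, act g x * e g = act g x
  act_range : ∀ g h, act g (e g⁻¹ * e h) = e g * e (g * h)
  act_inj : ∀ g x y, x * e g⁻¹ = x → y * e g⁻¹ = y → act g x = act g y → x = y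
  act_surj : ∀ g y, y * e g = y → ∃ x, x * e g⁻¹ = x ∧ act g x = y
  act_comp : ∀ g h x, x * (e h⁻¹ * e (g * h)⁻¹) = x → act g (act h x) = act (g * h) x

variable {G T : Type*} [Group G] [CommMonoid T]

/-- The idempotent `1_{g₁}·1_{g₁g₂}⋯1_{g₁⋯g_n}`, which is the identity element of the
group of `n`-cochains. -/
def cochainUnit (pa : MonoidPartialAction G T) (n : ℕ) (gs : Fin n → G) : T :=
  ∏ i : Fin n, pa.e (((List.ofFn gs).take (i + 1)).prod)

/-- An `n`-cochain of `G` with values in `T`: a function `f : Gⁿ → T` such that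
`f (g₁,…,g_n)` is an invertible element of the ideal `T·1_{g₁}·1_{g₁g₂}⋯1_{g₁⋯g_n}`. -/
def IsCochain (pa : MonoidPartialAction G T) (n : ℕ) (f : (Fin n → G) → T) : Prop :=
  ∀ gs : Fin n → G, f gs * cochainUnit pa n gs = f gs ∧
    ∃ u : T, u * cochainUnit pa n gs = u ∧ f gs * u = cochainUnit pa n gs

/-- The set `C^n(G,α,T)` of `n`-cochains is an abelian group under
pointwise multiplication, with identity `(g₁,…,g_n) ↦ 1_{g₁}·1_{g₁g₂}⋯1_{g₁⋯g_n}`: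
it contains the latter map, is closed under the (commutative, associative, pointwise)
multiplication, the latter map is a two-sided identity on it, and every `n`-cochain has an
inverse which is again an `n`-cochain. -/
theorem stmt4 (pa : MonoidPartialAction G T) (n : ℕ) :
    IsCochain pa n (cochainUnit pa n) ∧
    (∀ f f' : (Fin n → G) → T, IsCochain pa n f → IsCochain pa n f' →
      IsCochain pa n (fun gs => f gs * f' gs)) ∧
    (∀ f : (Fin n → G) → T, IsCochain pa n f →
      (fun gs => f gs * cochainUnit pa n gs) = f ∧
      (fun gs => cochainUnit pa n gs * f gs) = f) ∧
    (∀ f : (Fin n → G) → T, IsCochain pa n f →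
      ∃ finv : (Fin n → G) → T, IsCochain pa n finv ∧
        (fun gs => f gs * finv gs) = cochainUnit pa n) := by
  have hu : ∀ gs : Fin n → G, cochainUnit pa n gs * cochainUnit pa n gs = cochainUnit pa n gs := by
    intro gs
    unfold cochainUnit
    rw [← Finset.prod_mul_distrib]
    exact Finset.prod_congr rfl fun i _ => pa.idem _
  refine ⟨fun gs => ⟨hu gs, cochainUnit pa n gs, hu gs, hu gs⟩, ?_, ?_, ?_⟩
  · intro f f' hf hf' gs
    obtain ⟨h1, u, hu1, hu2⟩ := hf gs
    obtain ⟨h1', u', hu1', hu2'⟩ := hf' gs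
    refine ⟨by rw [mul_assoc, h1'], u * u', ?_, ?_⟩
    · rw [mul_assoc, hu1']
    · calc f gs * f' gs * (u * u') = (f gs * u) * (f' gs * u') := mul_mul_mul_comm _ _ _ _
        _ = cochainUnit pa n gs := by rw [hu2, hu2', hu gs]
  · intro f hf
    constructor
    · funext gs; exact (hf gs).1
    · funext gs; rw [mul_comm]; exact (hf gs).1
  · intro f hf
    choose finv h1 h2 using fun gs => (hf gs).2
    refine ⟨finv, fun gs => ⟨h1 gs, f gs, (hf gs).1, by rw [mul_comm]; exact h2 gs⟩, ?_⟩
    funext gs; exact h2 gs
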